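/- Let a_{ij}, b_{ij} (1 ≤ i,j ≤ 2) be real numbers satisfying (a_{11}−a_{21})(a_{22}−a_{12}) > 0 and (b_{11}−b_{12})(b_{22}−b_{21}) > 0. Set s = (a_{11}−a_{21}+a_{22}−a_{12})(b_{11}−b_{12}+b_{22}−b_{21}) and define the 2×2 matrix N̂ with entries N̂_{11} = (b_{22}−b_{21})(a_{22}−a_{12})/s, N̂_{12} = (b_{22}−b_{21})(a_{11}−a_{21})/s, N̂_{21} = (b_{11}−b_{12})(a_{22}−a_{12})/s, N̂_{22} = (b_{11}−b_{12})(a_{11}−a_{21})/s. Then N̂ has positive entries summing to 1, satisfies N̂_{11}N̂_{22} = N̂_{12}N̂_{21}, and satisfies f_1(N̂) = f_2(N̂) = 0; moreover N̂ is the unique 2×2 matrix P with positive entries summing to 1 such that p_{11}p_{22} = p_{12}p_{21} and f_1(P) = f_2(P) = 0. (N̂ is the unique totally mixed Nash equilibrium of the game.) -/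

import Mathlib

set_option maxHeartbeats 1000000 in
/-- Under the sign conditions, the scaled rank-one matrix `N̂`
is the unique totally mixed Nash equilibrium of the `2 × 2` game. -/
theorem nash_point_unique_totally_mixed
    (a11 a12 a21 a22 b11 b12 b21 b22 : ℝ)
    (ha : 0 < (a11 - a21) * (a22 - a12))
    (hb : 0 < (b11 - b12) * (b22 - b21))
    (s N11 N12 N21 N22 : ℝ)
    (hs : s = (a11 - a21 + a22 - a12) * (b11 - b12 + b22 - b21))
    (h11 : N11 = (b22 - b21) * (a22 - a12) / s)
    (h12 : N12 = (b22 - b21) * (a11 - a21) / s)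
    (h21 : N21 = (b11 - b12) * (a22 - a12) / s)
    (h22 : N22 = (b11 - b12) * (a11 - a21) / s) :
    (0 < N11 ∧ 0 < N12 ∧ 0 < N21 ∧ 0 < N22) ∧
    N11 + N12 + N21 + N22 = 1 ∧
    N11 * N22 = N12 * N21 ∧
    (N11 + N12) * (a21 * N21 + a22 * N22)
      - (a11 * N11 + a12 * N12) * (N21 + N22) = 0 ∧
    (N11 + N21) * (b12 * N12 + b22 * N22)
      - (b11 * N11 + b21 * N21) * (N12 + N22) = 0 ∧
    (∀ p11 p12 p21 p22 : ℝ,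
      (0 < p11 ∧ 0 < p12 ∧ 0 < p21 ∧ 0 < p22) →
      p11 + p12 + p21 + p22 = 1 →
      p11 * p22 = p12 * p21 →
      (p11 + p12) * (a21 * p21 + a22 * p22)
        - (a11 * p11 + a12 * p12) * (p21 + p22) = 0 →
      (p11 + p21) * (b12 * p12 + b22 * p22)
        - (b11 * p11 + b21 * p21) * (p12 + p22) = 0 →
      p11 = N11 ∧ p12 = N12 ∧ p21 = N21 ∧ p22 = N22) := by
  -- abbreviations (kept as explicit expressions)
  have hBAB : 0 < (a22 - a12) * ((a11 - a21) + (a22 - a12)) := by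
    nlinarith [sq_nonneg (a22 - a12)]
  have hAAB : 0 < (a11 - a21) * ((a11 - a21) + (a22 - a12)) := by
    nlinarith [sq_nonneg (a11 - a21)]
  have hDCD : 0 < (b22 - b21) * ((b11 - b12) + (b22 - b21)) := by
    nlinarith [sq_nonneg (b22 - b21)]
  have hCCD : 0 < (b11 - b12) * ((b11 - b12) + (b22 - b21)) := by
    nlinarith [sq_nonneg (b11 - b12)]
  have hAB : ((a11 - a21) + (a22 - a12)) ≠ 0 := by
    intro h; rw [h, mul_zero] at hBAB; exact lt_irrefl 0 hBAB
  have hCD : ((b11 - b12) + (b22 - b21)) ≠ 0 := by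
    intro h; rw [h, mul_zero] at hDCD; exact lt_irrefl 0 hDCD
  have hsne : s ≠ 0 := by
    rw [hs]
    exact mul_ne_zero (by intro h; apply hAB; linarith) (by intro h; apply hCD; linarith)
  have hs2 : 0 < s ^ 2 := by positivity
  -- positivity of entries: x / s = x * s / s ^ 2
  have key : ∀ x : ℝ, x / s = x * s / s ^ 2 := by
    intro x; field_simp
  have pos11 : 0 < N11 := by
    rw [h11, key]
    apply div_pos _ hs2
    have heq : (b22 - b21) * (a22 - a12) * s
        = ((a22 - a12) * ((a11 - a21) + (a22 - a12)))
          * ((b22 - b21) * ((b11 - b12) + (b22 - b21))) := by rw [hs]; ring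
    rw [heq]; exact mul_pos hBAB hDCD
  have pos12 : 0 < N12 := by
    rw [h12, key]
    apply div_pos _ hs2
    have heq : (b22 - b21) * (a11 - a21) * s
        = ((a11 - a21) * ((a11 - a21) + (a22 - a12)))
          * ((b22 - b21) * ((b11 - b12) + (b22 - b21))) := by rw [hs]; ring
    rw [heq]; exact mul_pos hAAB hDCD
  have pos21 : 0 < N21 := by
    rw [h21, key]
    apply div_pos _ hs2
    have heq : (b11 - b12) * (a22 - a12) * s
        = ((a22 - a12) * ((a11 - a21) + (a22 - a12)))
          * ((b11 - b12) * ((b11 - b12) + (b22 - b21))) := by rw [hs]; ring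
    rw [heq]; exact mul_pos hBAB hCCD
  have pos22 : 0 < N22 := by
    rw [h22, key]
    apply div_pos _ hs2
    have heq : (b11 - b12) * (a11 - a21) * s
        = ((a11 - a21) * ((a11 - a21) + (a22 - a12)))
          * ((b11 - b12) * ((b11 - b12) + (b22 - b21))) := by rw [hs]; ring
    rw [heq]; exact mul_pos hAAB hCCD
  refine ⟨⟨pos11, pos12, pos21, pos22⟩, ?_, ?_, ?_, ?_, ?_⟩
  · rw [h11, h12, h21, h22]
    field_simp [hsne]
    linear_combination -hs
  · rw [h11, h12, h21, h22]
    field_simp [hsne]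
  · rw [h11, h12, h21, h22]
    field_simp [hsne]
    ring
  · rw [h11, h12, h21, h22]
    field_simp [hsne]
    ring
  · rintro p11 p12 p21 p22 ⟨hp11, hp12, hp21, hp22⟩ hsum hrank hf1 hf2
    have hu : 0 < p11 + p12 := by linarith
    have hv : 0 < p21 + p22 := by linarith
    have hx : 0 < p11 + p21 := by linarith
    have hy : 0 < p12 + p22 := by linarith
    -- rank-one factorization
    have r11 : p11 = (p11 + p12) * (p11 + p21) := by
      linear_combination -p11 * hsum + hrank
    have r12 : p12 = (p11 + p12) * (p12 + p22) := by
      linear_combination -p12 * hsum - hrank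
    have r21 : p21 = (p21 + p22) * (p11 + p21) := by
      linear_combination -p21 * hsum - hrank
    have r22 : p22 = (p21 + p22) * (p12 + p22) := by
      linear_combination -p22 * hsum + hrank
    -- Spohn equations simplified via rank
    have e1 : (a11 - a21) * p11 * (p21 + p22) = (a22 - a12) * p22 * (p11 + p12) := by
      linear_combination -hf1 + (a12 - a21) * hrank
    have e2 : (b11 - b12) * p11 * (p12 + p22) = (b22 - b21) * p22 * (p11 + p21) := by
      linear_combination -hf2 + (b21 - b12) * hrank
    -- cancel common positive factors
    have e1' : (a11 - a21) * (p11 + p21) = (a22 - a12) * (p12 + p22) := by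
      have h : (a11 - a21) * (p11 + p21) * ((p11 + p12) * (p21 + p22))
          = (a22 - a12) * (p12 + p22) * ((p11 + p12) * (p21 + p22)) := by
        linear_combination e1 - (a11 - a21) * (p21 + p22) * r11
          + (a22 - a12) * (p11 + p12) * r22
      exact mul_right_cancel₀ (ne_of_gt (mul_pos hu hv)) h
    have e2' : (b11 - b12) * (p11 + p12) = (b22 - b21) * (p21 + p22) := by
      have h : (b11 - b12) * (p11 + p12) * ((p11 + p21) * (p12 + p22))
          = (b22 - b21) * (p21 + p22) * ((p11 + p21) * (p12 + p22)) := by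
        linear_combination e2 - (b11 - b12) * (p12 + p22) * r11
          + (b22 - b21) * (p11 + p21) * r22
      exact mul_right_cancel₀ (ne_of_gt (mul_pos hx hy)) h
    -- solve for the marginals
    have hxeq : (p11 + p21) * ((a11 - a21) + (a22 - a12)) = (a22 - a12) := by
      linear_combination e1' + (a22 - a12) * hsum
    have hyeq : (p12 + p22) * ((a11 - a21) + (a22 - a12)) = (a11 - a21) := by
      linear_combination ((a11 - a21) + (a22 - a12)) * hsum - hxeq
    have hueq : (p11 + p12) * ((b11 - b12) + (b22 - b21)) = (b22 - b21) := by
      linear_combination e2' + (b22 - b21) * hsum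
    have hveq : (p21 + p22) * ((b11 - b12) + (b22 - b21)) = (b11 - b12) := by
      linear_combination ((b11 - b12) + (b22 - b21)) * hsum - hueq
    refine ⟨?_, ?_, ?_, ?_⟩
    · rw [h11, hs, eq_div_iff (by rw [← hs]; exact hsne)]
      linear_combination ((a11 - a21) + (a22 - a12)) * ((b11 - b12) + (b22 - b21)) * r11
        + (p11 + p12) * ((b11 - b12) + (b22 - b21)) * hxeq + (a22 - a12) * hueq
    · rw [h12, hs, eq_div_iff (by rw [← hs]; exact hsne)]
      linear_combination ((a11 - a21) + (a22 - a12)) * ((b11 - b12) + (b22 - b21)) * r12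
        + (p11 + p12) * ((b11 - b12) + (b22 - b21)) * hyeq + (a11 - a21) * hueq
    · rw [h21, hs, eq_div_iff (by rw [← hs]; exact hsne)]
      linear_combination ((a11 - a21) + (a22 - a12)) * ((b11 - b12) + (b22 - b21)) * r21
        + (p21 + p22) * ((b11 - b12) + (b22 - b21)) * hxeq + (a22 - a12) * hveq
    · rw [h22, hs, eq_div_iff (by rw [← hs]; exact hsne)]
      linear_combination ((a11 - a21) + (a22 - a12)) * ((b11 - b12) + (b22 - b21)) * r22
        + (p21 + p22) * ((b11 - b12) + (b22 - b21)) * hyeq + (a11 - a21) * hveq
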